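/- Suppose the norm ν on E is order continuous. Then ρ has the Fatou property on E^t: for every nonempty upward-directed set D of positive elements of E^t whose supremum in G is an element x ∈ E^t, one has sup{ρ(d) : d ∈ D} = ρ(x). -/

import Mathlib

/-- If `E` is order dense in the Archimedean space `G`, then any `b` lying below
every `E`-element above `v` lies below `v` (given at least one such `E`-element). -/
theorem aux_dense_le
    {G : Type*} [Lattice G] [AddCommGroup G] [Module ℝ G]
    [CovariantClass G G (· + ·) (· ≤ ·)]
    (arch : ∀ x y : G, (∀ n : ℕ, n • x ≤ y) → x ≤ 0)
    (E : Set G)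
    (hEadd : ∀ x ∈ E, ∀ y ∈ E, x + y ∈ E)
    (hEsmul : ∀ (c : ℝ), ∀ x ∈ E, c • x ∈ E)
    (hdense : ∀ x : G, 0 < x → ∃ y ∈ E, 0 < y ∧ y ≤ x)
    (v b : G) (hb : ∀ y ∈ E, v ≤ y → b ≤ y)
    (y₀ : G) (hy₀E : y₀ ∈ E) (hy₀ : v ≤ y₀) : b ≤ v := by
  by_contra h
  have hp : 0 < (b - v) ⊔ 0 := by
    rcases (le_sup_right : (0:G) ≤ (b - v) ⊔ 0).lt_or_eq with h' | h'
    · exact h'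
    · exact absurd (sub_nonpos.mp (le_sup_left.trans h'.ge)) h
  obtain ⟨e, heE, hepos, hep⟩ := hdense _ hp
  have hneg : -e ∈ E := by
    have := hEsmul (-1) e heE; rwa [neg_one_smul] at this
  have key : ∀ n : ℕ, y₀ - n • e ∈ E ∧ v ≤ y₀ - n • e := by
    intro n
    induction n with
    | zero => simpa using ⟨hy₀E, hy₀⟩
    | succ n ih =>
      obtain ⟨hmem, hv⟩ := ih
      have hb' : b ≤ y₀ - n • e := hb _ hmem hv
      have he' : e ≤ (y₀ - n • e) - v := by
        refine hep.trans (sup_le (sub_le_sub_right hb' v) (sub_nonneg.mpr hv))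
      constructor
      · have : y₀ - n • e + -e ∈ E := hEadd _ hmem _ hneg
        have heq : y₀ - n • e + -e = y₀ - (n + 1) • e := by
          rw [succ_nsmul]; abel
        rwa [heq] at this
      · have : v ≤ y₀ - n • e - e := le_sub_iff_add_le.mpr (by
          have := sub_le_sub_right he' 0
          have h2 : v + e ≤ y₀ - n • e := by
            have := add_le_add_right he' v
            calc v + e ≤ v + ((y₀ - n • e) - v) := this
              _ = y₀ - n • e := by abel
          exact h2)
        have heq : y₀ - n • e - e = y₀ - (n + 1) • e := by
          rw [succ_nsmul]; abel
        rwa [heq] at this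
  have : e ≤ 0 := arch e (y₀ - v) (fun n => by
    have := (key n).2
    exact le_sub_comm.mp this)
  exact hepos.not_ge this

theorem stmt8
    {G : Type*} [Lattice G] [AddCommGroup G] [Module ℝ G]
    [CovariantClass G G (· + ·) (· ≤ ·)] [PosSMulMono ℝ G]
    (arch : ∀ x y : G, (∀ n : ℕ, n • x ≤ y) → x ≤ 0)
    (E : Set G)
    (hE0 : (0 : G) ∈ E)
    (hEadd : ∀ x ∈ E, ∀ y ∈ E, x + y ∈ E)
    (hEsmul : ∀ (c : ℝ), ∀ x ∈ E, c • x ∈ E)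
    (hEsup : ∀ x ∈ E, ∀ y ∈ E, x ⊔ y ∈ E)
    (hEinf : ∀ x ∈ E, ∀ y ∈ E, x ⊓ y ∈ E)
    (hdense : ∀ x : G, 0 < x → ∃ y ∈ E, 0 < y ∧ y ≤ x)
    (hmaj : ∀ x : G, ∃ y ∈ E, x ≤ y)
    (ν : G → ℝ)
    (hν_zero : ∀ x ∈ E, (ν x = 0 ↔ x = 0))
    (hν_smul : ∀ (c : ℝ), ∀ x ∈ E, ν (c • x) = |c| * ν x)
    (hν_add : ∀ x ∈ E, ∀ y ∈ E, ν (x + y) ≤ ν x + ν y)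
    (hν_mono : ∀ x ∈ E, ∀ y ∈ E, |x| ≤ |y| → ν x ≤ ν y)
    (ρ : G → ℝ)
    (hρ : ∀ x : G, ρ x = sSup (ν '' {z | z ∈ E ∧ 0 ≤ z ∧ z ≤ |x|}))
    (ι : G → ℝ)
    (hι : ∀ x : G, ι x = sInf (ν '' {y | y ∈ E ∧ |x| ≤ y}))
    (Et : Set G)
    (hEEt : E ⊆ Et)
    (hEtadd : ∀ x ∈ Et, ∀ y ∈ Et, x + y ∈ Et)
    (hEtsmul : ∀ (c : ℝ), ∀ x ∈ Et, c • x ∈ Et)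
    (hEtsup : ∀ x ∈ Et, ∀ y ∈ Et, x ⊔ y ∈ Et)
    (hEtinf : ∀ x ∈ Et, ∀ y ∈ Et, x ⊓ y ∈ Et)
    (hEt : ∀ x ∈ Et, ι x = ρ x)
    (hoc : ∀ D : Set G, D.Nonempty → D ⊆ E → (∀ d ∈ D, 0 ≤ d) →
      DirectedOn (· ≥ ·) D → IsGLB D 0 → sInf (ν '' D) = 0)
    :
    ∀ D : Set G, D.Nonempty → D ⊆ Et → (∀ d ∈ D, 0 ≤ d) → DirectedOn (· ≤ ·) D →
      ∀ x ∈ Et, IsLUB D x → sSup (ρ '' D) = ρ x := by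
  -- basic facts about ν
  have hν0 : ν 0 = 0 := (hν_zero 0 hE0).mpr rfl
  have hνnn : ∀ e ∈ E, 0 ≤ ν e := by
    intro e he
    have := hν_mono 0 hE0 e he (by rw [abs_zero]; exact abs_nonneg e)
    linarith [hν0 ▸ this]
  -- the defining set for ρ is nonempty and bounded above
  have hSmem0 : ∀ w : G, (0:G) ∈ {z | z ∈ E ∧ 0 ≤ z ∧ z ≤ |w|} :=
    fun w => ⟨hE0, le_refl 0, abs_nonneg w⟩
  have hSne : ∀ w : G, (ν '' {z | z ∈ E ∧ 0 ≤ z ∧ z ≤ |w|}).Nonempty :=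
    fun w => ⟨ν 0, 0, hSmem0 w, rfl⟩
  have hSbdd : ∀ w : G, BddAbove (ν '' {z | z ∈ E ∧ 0 ≤ z ∧ z ≤ |w|}) := by
    intro w
    obtain ⟨y, hyE, hy⟩ := hmaj |w|
    refine ⟨ν y, ?_⟩
    rintro _ ⟨z, ⟨hzE, hz0, hzle⟩, rfl⟩
    exact hν_mono z hzE y hyE (by
      rw [abs_of_nonneg hz0, abs_of_nonneg ((abs_nonneg w).trans hy)]
      exact hzle.trans hy)
  -- ρ is monotone on nonnegative elements
  have hρmono : ∀ a b : G, 0 ≤ a → a ≤ b → ρ a ≤ ρ b := by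
    intro a b ha hab
    rw [hρ a, hρ b]
    refine csSup_le_csSup (hSbdd b) (hSne a) (Set.image_mono ?_)
    rintro z ⟨hzE, hz0, hzle⟩
    refine ⟨hzE, hz0, hzle.trans ?_⟩
    rw [abs_of_nonneg ha, abs_of_nonneg (ha.trans hab)]; exact hab
  intro D hDne hDEt hDpos hDdir x hxEt hxlub
  obtain ⟨d₀, hd₀⟩ := hDne
  have hx0 : 0 ≤ x := (hDpos d₀ hd₀).trans (hxlub.1 hd₀)
  have hub : ∀ d ∈ D, ρ d ≤ ρ x := fun d hd => hρmono d x (hDpos d hd) (hxlub.1 hd)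
  have hsbdd : BddAbove (ρ '' D) := ⟨ρ x, by rintro _ ⟨d, hd, rfl⟩; exact hub d hd⟩
  set s := sSup (ρ '' D) with hs
  have h1 : s ≤ ρ x :=
    csSup_le ((Set.nonempty_of_mem hd₀).image ρ)
      (by rintro _ ⟨d, hd, rfl⟩; exact hub d hd)
  have h2 : ρ x ≤ s := by
    rw [hρ x, abs_of_nonneg hx0]
    refine csSup_le ⟨ν 0, 0, ⟨hE0, le_refl 0, hx0⟩, rfl⟩ ?_
    rintro _ ⟨z, ⟨hzE, hz0, hzle⟩, rfl⟩
    -- show ν z ≤ s for each z ∈ E with 0 ≤ z ≤ x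
    refine le_of_forall_pos_le_add ?_
    intro ε hε
    -- the set of E-elements squeezed between z - z⊓d and z
    set F : Set G := {w | w ∈ E ∧ 0 ≤ w ∧ w ≤ z ∧ ∃ d ∈ D, z - z ⊓ d ≤ w} with hF
    have hud0 : ∀ d ∈ D, 0 ≤ z ⊓ d := fun d hd => le_inf hz0 (hDpos d hd)
    have hudz : ∀ d ∈ D, z - z ⊓ d ≤ z := fun d hd => sub_le_self z (hud0 d hd)
    have hzF : z ∈ F := ⟨hzE, hz0, le_refl z, d₀, hd₀, hudz d₀ hd₀⟩
    have hFne : F.Nonempty := ⟨z, hzF⟩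
    have hFsub : F ⊆ E := fun w hw => hw.1
    have hFpos : ∀ w ∈ F, 0 ≤ w := fun w hw => hw.2.1
    have hFdir : DirectedOn (· ≥ ·) F := by
      rintro w₁ ⟨h1E, h10, h1z, d₁, hd₁, h1d⟩ w₂ ⟨h2E, h20, h2z, d₂, hd₂, h2d⟩
      obtain ⟨d₃, hd₃, h13, h23⟩ := hDdir d₁ hd₁ d₂ hd₂
      refine ⟨w₁ ⊓ w₂, ⟨hEinf _ h1E _ h2E, le_inf h10 h20, inf_le_left.trans h1z,
        d₃, hd₃, le_inf ?_ ?_⟩, inf_le_left, inf_le_right⟩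
      · exact (sub_le_sub_left (inf_le_inf_left z h13) z).trans h1d
      · exact (sub_le_sub_left (inf_le_inf_left z h23) z).trans h2d
    have hFglb : IsGLB F 0 := by
      constructor
      · exact fun w hw => hw.2.1
      · intro b hb
        have key : ∀ d ∈ D, b ≤ z - z ⊓ d := by
          intro d hd
          refine aux_dense_le arch E hEadd hEsmul hdense (z - z ⊓ d) b ?_ z hzE (hudz d hd)
          intro y hyE hyv
          have h0y : 0 ≤ z - z ⊓ d := sub_nonneg.mpr inf_le_left
          have hyzF : y ⊓ z ∈ F :=
            ⟨hEinf _ hyE _ hzE, le_inf (h0y.trans hyv) hz0, inf_le_right,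
              d, hd, le_inf hyv (hudz d hd)⟩
          exact (hb hyzF).trans inf_le_left
        have hubD : ∀ d ∈ D, d ≤ x - b := by
          intro d hd
          have ha1 : z + d - x ≤ z := by
            have h := sub_le_sub_right (add_le_add_right (hxlub.1 hd) z) x
            calc z + d - x ≤ z + x - x := h
              _ = z := by abel
          have ha2 : z + d - x ≤ d := by
            have h := sub_le_sub_right (add_le_add_left hzle d) x
            calc z + d - x ≤ x + d - x := h
              _ = d := by abel
          have h1' : z + d - x ≤ z ⊓ d := le_inf ha1 ha2
          have h2' : z ⊓ d ≤ z - b := by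
            have := key d hd
            calc z ⊓ d = z - (z - z ⊓ d) := by abel
              _ ≤ z - b := sub_le_sub_left this z
          have h3' := h1'.trans h2'
          calc d = (z + d - x) - z + x := by abel
            _ ≤ (z - b) - z + x := add_le_add_left (sub_le_sub_right h3' z) x
            _ = x - b := by abel
        have hxle : x ≤ x - b := hxlub.2 hubD
        have h4 : x + b ≤ x + 0 := by
          have := add_le_add_left hxle b
          calc x + b ≤ x - b + b := this
            _ = x + 0 := by abel
        exact le_of_add_le_add_left h4
    have hInfF : sInf (ν '' F) = 0 := hoc F hFne hFsub hFpos hFdir hFglb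
    obtain ⟨_, ⟨w, hwF, rfl⟩, hwlt⟩ :=
      exists_lt_of_csInf_lt (hFne.image ν) (by rw [hInfF]; linarith : sInf (ν '' F) < ε / 2)
    obtain ⟨hwE, hw0, hwz, d, hd, hwd⟩ := hwF
    have hzdEt : z ⊓ d ∈ Et := hEtinf z (hEEt hzE) d (hDEt hd)
    have hzd0 : 0 ≤ z ⊓ d := hud0 d hd
    -- choose y ∈ E with z ⊓ d ≤ y and ν y < ι (z ⊓ d) + ε/2
    have hTne : (ν '' {y | y ∈ E ∧ |z ⊓ d| ≤ y}).Nonempty :=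
      ⟨ν z, z, ⟨hzE, by rw [abs_of_nonneg hzd0]; exact inf_le_left⟩, rfl⟩
    have hιlt : sInf (ν '' {y | y ∈ E ∧ |z ⊓ d| ≤ y}) < ι (z ⊓ d) + ε / 2 := by
      rw [hι (z ⊓ d)]; linarith
    obtain ⟨_, ⟨y, ⟨hyE, hyge⟩, rfl⟩, hylt⟩ := exists_lt_of_csInf_lt hTne hιlt
    rw [abs_of_nonneg hzd0] at hyge
    have hy0 : 0 ≤ y := hzd0.trans hyge
    have hzdyz : z ⊓ d ≤ y ⊓ z := le_inf hyge inf_le_left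
    have hyz0 : 0 ≤ y ⊓ z := hzd0.trans hzdyz
    have hmem1 : y ⊓ z ∈ E := hEinf _ hyE _ hzE
    have hmem2 : z - y ⊓ z ∈ E := by
      have hneg : -(y ⊓ z) ∈ E := by
        have := hEsmul (-1) _ hmem1; rwa [neg_one_smul] at this
      have := hEadd z hzE _ hneg
      rwa [← sub_eq_add_neg] at this
    have hsplit : ν z ≤ ν (y ⊓ z) + ν (z - y ⊓ z) := by
      have heq : y ⊓ z + (z - y ⊓ z) = z := by abel
      calc ν z = ν (y ⊓ z + (z - y ⊓ z)) := by rw [heq]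
        _ ≤ _ := hν_add _ hmem1 _ hmem2
    have hb1 : ν (y ⊓ z) ≤ ν y :=
      hν_mono _ hmem1 _ hyE (by
        rw [abs_of_nonneg hyz0, abs_of_nonneg hy0]; exact inf_le_left)
    have hb2 : ν (z - y ⊓ z) ≤ ν w := by
      refine hν_mono _ hmem2 _ hwE ?_
      have h0' : 0 ≤ z - y ⊓ z := sub_nonneg.mpr inf_le_right
      rw [abs_of_nonneg h0', abs_of_nonneg hw0]
      exact (sub_le_sub_left hzdyz z).trans hwd
    have hρd : ρ (z ⊓ d) ≤ ρ d := hρmono _ _ hzd0 inf_le_right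
    have hds : ρ d ≤ s := le_csSup hsbdd ⟨d, hd, rfl⟩
    have hιρ : ι (z ⊓ d) = ρ (z ⊓ d) := hEt _ hzdEt
    linarith
  exact le_antisymm h1 h2
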